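/- Suppose v^max := 1_n + 2·L_red⁻¹ q belongs to D and the feasible set F = {v ∈ D : v ≤ g(v) componentwise} is nonempty. Then for every weight vector w ∈ ℝⁿ with w_i > 0 for all i, the function v ↦ Σ_{i=1}^n w_i·log(v_i) attains its maximum over F at a unique point v*; this maximizer satisfies g(v*) = v*, it is independent of the choice of w, and v ≤ v* componentwise for every v ∈ F. -/

import Mathlib

open Finset Matrix

noncomputable section

/-- Extension of a voltage vector `v ∈ ℝⁿ` to all buses `{0,1,…,n}`,
with the slack-bus convention `v₀ = 1`. -/
def extV {n : ℕ} (v : Fin n → ℝ) : Fin (n + 1) → ℝ := Fin.cons (1 : ℝ) v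

/-- The domain `D = {v ∈ ℝⁿ : vᵢ > 0 ∀ i, vᵢ vₖ ≥ sᵢₖ² on every edge}` (with `v₀ = 1`). -/
def memD {n : ℕ} (B : Matrix (Fin (n + 1)) (Fin (n + 1)) ℝ)
    (s : Fin (n + 1) → Fin (n + 1) → ℝ) (v : Fin n → ℝ) : Prop :=
  (∀ i, 0 < v i) ∧ ∀ i k, 0 < B i k → s i k ^ 2 ≤ extV v i * extV v k

/-- The fixed-point map `g` with
`gᵢ(v) = qᵢ/𝐁ᵢ + Σ_{k ∈ N(i)} (Bᵢₖ/𝐁ᵢ)·√(vᵢvₖ − sᵢₖ²)`. -/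
def gmap {n : ℕ} (B : Matrix (Fin (n + 1)) (Fin (n + 1)) ℝ)
    (s : Fin (n + 1) → Fin (n + 1) → ℝ) (q : Fin n → ℝ) (v : Fin n → ℝ) :
    Fin n → ℝ := fun i =>
  q i / (∑ k, B i.succ k) +
    ∑ k ∈ Finset.univ.filter (fun k => 0 < B i.succ k),
      (B i.succ k / (∑ k', B i.succ k')) *
        Real.sqrt (extV v i.succ * extV v k - s i.succ k ^ 2)

/-- The reduced Laplacian `L_red` (Laplacian of the weighted graph with the
row and column of vertex `0` deleted). -/
def Lred {n : ℕ} (B : Matrix (Fin (n + 1)) (Fin (n + 1)) ℝ) :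
    Matrix (Fin n) (Fin n) ℝ := fun i k =>
  if i = k then ∑ j, B i.succ j else -B i.succ k.succ

/-- `v^max := 1ₙ + 2·L_red⁻¹ q`. -/
def vmax {n : ℕ} (B : Matrix (Fin (n + 1)) (Fin (n + 1)) ℝ) (q : Fin n → ℝ) :
    Fin n → ℝ := fun i => 1 + 2 * ((Lred B)⁻¹ *ᵥ q) i

namespace Stmt13Aux

variable {n : ℕ}

lemma extV_nonneg {v : Fin n → ℝ} (hv : ∀ i, 0 < v i) : ∀ k, 0 ≤ extV v k := by
  intro k
  refine Fin.cases ?_ ?_ k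
  · simp [extV]
  · intro j; simpa [extV] using (hv j).le

lemma extV_mono {v v' : Fin n → ℝ} (h : ∀ i, v i ≤ v' i) : ∀ k, extV v k ≤ extV v' k := by
  intro k
  refine Fin.cases ?_ ?_ k
  · simp [extV]
  · intro j; simpa [extV] using h j

lemma extV_succ (v : Fin n → ℝ) (i : Fin n) : extV v i.succ = v i := by simp [extV]

lemma Bsum_pos (B : Matrix (Fin (n + 1)) (Fin (n + 1)) ℝ)
    (hBnonneg : ∀ i k, 0 ≤ B i k)
    (G : SimpleGraph (Fin (n + 1)))
    (hGadj : ∀ i k, G.Adj i k ↔ 0 < B i k)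
    (hGconn : G.Connected) (i : Fin n) : 0 < ∑ k, B i.succ k := by
  obtain ⟨w⟩ := hGconn.preconnected i.succ 0
  have hadj : ∃ k, G.Adj i.succ k := by
    cases w with
    | cons h p => exact ⟨_, h⟩
  obtain ⟨k, hk⟩ := hadj
  have hpos := (hGadj _ _).mp hk
  exact lt_of_lt_of_le hpos (Finset.single_le_sum (f := fun j => B i.succ j) (fun j _ => hBnonneg _ _) (Finset.mem_univ k))

lemma Lred_mulVec (B : Matrix (Fin (n + 1)) (Fin (n + 1)) ℝ)
    (hBdiag : ∀ i, B i i = 0) (u : Fin n → ℝ) (i : Fin n) :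
    (Lred B *ᵥ u) i
      = (∑ j, B i.succ j) * u i - ∑ k : Fin n, B i.succ k.succ * u k := by
  simp only [Matrix.mulVec, dotProduct, Lred]
  have h : ∀ k : Fin n,
      (if i = k then ∑ j, B i.succ j else -B i.succ k.succ) * u k
        = (if i = k then (∑ j, B i.succ j) * u k else 0) - B i.succ k.succ * u k := by
    intro k
    by_cases hik : i = k
    · subst hik; simp [hBdiag]
    · simp [hik]
  rw [Finset.sum_congr rfl fun k _ => h k, Finset.sum_sub_distrib, Finset.sum_ite_eq]
  simp

lemma maxPrinciple (B : Matrix (Fin (n + 1)) (Fin (n + 1)) ℝ)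
    (hBdiag : ∀ i, B i i = 0)
    (hBnonneg : ∀ i k, 0 ≤ B i k)
    (G : SimpleGraph (Fin (n + 1)))
    (hGadj : ∀ i k, G.Adj i k ↔ 0 < B i k)
    (hGconn : G.Connected)
    (u : Fin n → ℝ) (hu : ∀ i, 0 ≤ (Lred B *ᵥ u) i) : ∀ i, 0 ≤ u i := by
  set U : Fin (n + 1) → ℝ := Fin.cons 0 u with hU
  have hmv : ∀ i : Fin n,
      (Lred B *ᵥ u) i = ∑ j : Fin (n + 1), B i.succ j * (U i.succ - U j) := by
    intro i
    have h2 : ∑ j : Fin (n + 1), B i.succ j * (U i.succ - U j)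
        = (∑ j, B i.succ j) * U i.succ - ∑ j : Fin (n + 1), B i.succ j * U j := by
      simp only [mul_sub]
      rw [Finset.sum_sub_distrib, ← Finset.sum_mul]
    have h3 : ∑ j : Fin (n + 1), B i.succ j * U j
        = ∑ k : Fin n, B i.succ k.succ * u k := by
      rw [Fin.sum_univ_succ]
      simp [hU]
    rw [Lred_mulVec B hBdiag u i, h2, h3]
    simp [hU]
  by_contra hneg
  push_neg at hneg
  obtain ⟨i₀, hi₀⟩ := hneg
  obtain ⟨j₀, -, hj₀⟩ := Finset.exists_min_image Finset.univ U ⟨0, Finset.mem_univ 0⟩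
  set m := U j₀ with hm
  have hmle : ∀ j, m ≤ U j := fun j => hj₀ j (Finset.mem_univ j)
  have hmneg : m < 0 := lt_of_le_of_lt (hmle i₀.succ) (by simpa [hU] using hi₀)
  have key : ∀ (a b : Fin (n + 1)) (w : G.Walk a b), b = 0 → U a = m → False := by
    intro a b w
    induction w with
    | nil =>
      intro hb h0
      subst hb
      simp only [hU, Fin.cons_zero] at h0
      exact absurd h0.symm (ne_of_lt hmneg)
    | @cons x y z hadj p ih =>
      intro hb hUa
      by_cases hx : x = 0
      · subst hx
        simp only [hU, Fin.cons_zero] at hUa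
        exact absurd hUa.symm (ne_of_lt hmneg)
      · obtain ⟨c, rfl⟩ := Fin.eq_succ_of_ne_zero hx
        have h0 := hu c
        rw [hmv c] at h0
        have hterms : ∀ j ∈ Finset.univ, B c.succ j * (U c.succ - U j) ≤ 0 := by
          intro j _
          refine mul_nonpos_of_nonneg_of_nonpos (hBnonneg _ _) ?_
          rw [hUa]
          linarith [hmle j]
        have hzero := (Finset.sum_eq_zero_iff_of_nonpos hterms).mp
          (le_antisymm (Finset.sum_nonpos hterms) h0)
        have hy := hzero y (Finset.mem_univ y)
        have hBpos := (hGadj _ _).mp hadj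
        have hUy : U y = m := by
          rcases mul_eq_zero.mp hy with h | h
          · exact absurd h (ne_of_gt hBpos)
          · rw [hUa] at h; linarith
        exact ih hb hUy
  obtain ⟨w⟩ := hGconn.preconnected j₀ 0
  exact key j₀ 0 w rfl hm.symm

lemma Lred_det_ne_zero (B : Matrix (Fin (n + 1)) (Fin (n + 1)) ℝ)
    (hBdiag : ∀ i, B i i = 0)
    (hBnonneg : ∀ i k, 0 ≤ B i k)
    (G : SimpleGraph (Fin (n + 1)))
    (hGadj : ∀ i k, G.Adj i k ↔ 0 < B i k)
    (hGconn : G.Connected) : (Lred B).det ≠ 0 := by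
  intro hdet
  obtain ⟨x, hx0, hx⟩ := Matrix.exists_mulVec_eq_zero_iff.mpr hdet
  have h1 := maxPrinciple B hBdiag hBnonneg G hGadj hGconn x
    (fun i => by rw [hx]; exact le_refl _)
  have h2 := maxPrinciple B hBdiag hBnonneg G hGadj hGconn (-x)
    (fun i => by rw [Matrix.mulVec_neg, hx]; simp)
  apply hx0
  funext i
  have hx2 := h2 i
  simp only [Pi.neg_apply] at hx2
  have := h1 i
  simp only [Pi.zero_apply]
  linarith

lemma gmap_mono (B : Matrix (Fin (n + 1)) (Fin (n + 1)) ℝ)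
    (s : Fin (n + 1) → Fin (n + 1) → ℝ) (q : Fin n → ℝ)
    (hBnonneg : ∀ i k, 0 ≤ B i k)
    {v v' : Fin n → ℝ} (hv : ∀ i, 0 < v i) (h : ∀ i, v i ≤ v' i) (i : Fin n) :
    gmap B s q v i ≤ gmap B s q v' i := by
  unfold gmap
  refine add_le_add_right (Finset.sum_le_sum fun k _ => ?_) _
  refine mul_le_mul_of_nonneg_left ?_
    (div_nonneg (hBnonneg _ _) (Finset.sum_nonneg fun j _ => hBnonneg _ _))
  refine Real.sqrt_le_sqrt (sub_le_sub_right ?_ _)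
  exact mul_le_mul (extV_mono h i.succ) (extV_mono h k) (extV_nonneg hv k)
    (le_trans (extV_nonneg hv i.succ) (extV_mono h i.succ))

lemma feas_le (B : Matrix (Fin (n + 1)) (Fin (n + 1)) ℝ)
    (s : Fin (n + 1) → Fin (n + 1) → ℝ) (q : Fin n → ℝ)
    (hBnonneg : ∀ i k, 0 ≤ B i k)
    (G : SimpleGraph (Fin (n + 1)))
    (hGadj : ∀ i k, G.Adj i k ↔ 0 < B i k)
    (hGconn : G.Connected)
    (hBdiag : ∀ i, B i i = 0)
    (v : Fin n → ℝ) (hvD : memD B s v) (hvg : ∀ i, v i ≤ gmap B s q v i) :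
    ∀ i, (Lred B *ᵥ (fun k => v k - 1)) i ≤ 2 * q i := by
  intro i
  have hBpos := Bsum_pos B hBnonneg G hGadj hGconn i
  have hvpos := hvD.1
  have hext : ∀ k, 0 ≤ extV v k := extV_nonneg hvpos
  have hsq : ∀ k, Real.sqrt (extV v i.succ * extV v k - s i.succ k ^ 2)
      ≤ (extV v i.succ + extV v k) / 2 := by
    intro k
    have h1 : extV v i.succ * extV v k - s i.succ k ^ 2
        ≤ ((extV v i.succ + extV v k) / 2) ^ 2 := by
      nlinarith [sq_nonneg (s i.succ k), sq_nonneg (extV v i.succ - extV v k)]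
    calc Real.sqrt (extV v i.succ * extV v k - s i.succ k ^ 2)
        ≤ Real.sqrt (((extV v i.succ + extV v k) / 2) ^ 2) := Real.sqrt_le_sqrt h1
      _ = (extV v i.succ + extV v k) / 2 :=
          Real.sqrt_sq (div_nonneg (add_nonneg (hext _) (hext _)) (by norm_num))
  have step1 : v i ≤ q i / (∑ k, B i.succ k)
      + ∑ k ∈ Finset.univ.filter (fun k => 0 < B i.succ k),
          (B i.succ k / (∑ k', B i.succ k')) * ((extV v i.succ + extV v k) / 2) := by
    refine le_trans (hvg i) (add_le_add_right (Finset.sum_le_sum fun k _ => ?_) _)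
    exact mul_le_mul_of_nonneg_left (hsq k)
      (div_nonneg (hBnonneg _ _) (Finset.sum_nonneg fun j _ => hBnonneg _ _))
  have step2 : ∑ k ∈ Finset.univ.filter (fun k => 0 < B i.succ k),
          (B i.succ k / (∑ k', B i.succ k')) * ((extV v i.succ + extV v k) / 2)
      = ∑ k : Fin (n + 1),
          (B i.succ k / (∑ k', B i.succ k')) * ((extV v i.succ + extV v k) / 2) := by
    refine Finset.sum_subset (Finset.filter_subset _ _) ?_
    intro k _ hk
    have hB0 : B i.succ k = 0 := by
      have := (Finset.mem_filter.not.mp hk)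
      push_neg at this
      exact le_antisymm (this (Finset.mem_univ k)) (hBnonneg _ _)
    simp [hB0]
  have step3 : v i ≤ q i / (∑ k, B i.succ k)
      + ∑ k : Fin (n + 1),
          (B i.succ k / (∑ k', B i.succ k')) * ((v i + extV v k) / 2) := by
    rw [← extV_succ v i]
    exact step2 ▸ step1
  have step4 : v i * (∑ k, B i.succ k)
      ≤ q i + ∑ k : Fin (n + 1), B i.succ k * ((v i + extV v k) / 2) := by
    rw [← le_div_iff₀ hBpos]
    refine le_trans step3 (le_of_eq ?_)
    rw [Finset.sum_congr rfl (fun k _ => div_mul_eq_mul_div (B i.succ k) _ _),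
      ← Finset.sum_div, ← add_div]
  have hexp : ∑ k : Fin (n + 1), B i.succ k * ((v i + extV v k) / 2)
      = ((∑ k, B i.succ k) * v i) / 2
        + (B i.succ 0 + ∑ k : Fin n, B i.succ k.succ * v k) / 2 := by
    have e1 : ∀ k : Fin (n + 1), B i.succ k * ((v i + extV v k) / 2)
        = B i.succ k * v i / 2 + B i.succ k * extV v k / 2 := fun k => by ring
    rw [Finset.sum_congr rfl fun k _ => e1 k, Finset.sum_add_distrib,
      ← Finset.sum_div, ← Finset.sum_div, ← Finset.sum_mul]
    congr 2
    rw [Fin.sum_univ_succ]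
    simp [extV]
  have hBsplit : (∑ k, B i.succ k) = B i.succ 0 + ∑ k : Fin n, B i.succ k.succ :=
    Fin.sum_univ_succ _
  have hsub : ∑ k : Fin n, B i.succ k.succ * (v k - 1)
      = (∑ k : Fin n, B i.succ k.succ * v k) - ∑ k : Fin n, B i.succ k.succ := by
    rw [← Finset.sum_sub_distrib]
    exact Finset.sum_congr rfl fun k _ => by ring
  rw [Lred_mulVec B hBdiag _ i, hsub, mul_sub, mul_one]
  rw [hexp] at step4
  rw [mul_comm] at step4
  linarith

lemma le_vmax (B : Matrix (Fin (n + 1)) (Fin (n + 1)) ℝ)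
    (s : Fin (n + 1) → Fin (n + 1) → ℝ) (q : Fin n → ℝ)
    (hBdiag : ∀ i, B i i = 0)
    (hBnonneg : ∀ i k, 0 ≤ B i k)
    (G : SimpleGraph (Fin (n + 1)))
    (hGadj : ∀ i k, G.Adj i k ↔ 0 < B i k)
    (hGconn : G.Connected)
    (v : Fin n → ℝ) (hvD : memD B s v) (hvg : ∀ i, v i ≤ gmap B s q v i) :
    ∀ i, v i ≤ vmax B q i := by
  have hdet := Lred_det_ne_zero B hBdiag hBnonneg G hGadj hGconn
  have hAq : Lred B *ᵥ (fun k => vmax B q k - 1) = fun i => 2 * q i := by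
    have h1 : (fun k => vmax B q k - 1) = (2 : ℝ) • ((Lred B)⁻¹ *ᵥ q) := by
      funext k
      simp [vmax, smul_eq_mul]
    rw [h1, Matrix.mulVec_smul, Matrix.mulVec_mulVec,
      Matrix.mul_nonsing_inv _ (isUnit_iff_ne_zero.mpr hdet), Matrix.one_mulVec]
    funext i
    simp [smul_eq_mul]
  have hMP := maxPrinciple B hBdiag hBnonneg G hGadj hGconn
    (fun k => vmax B q k - v k) ?_
  · intro i
    have := hMP i
    linarith
  · intro i
    have hdiff : (fun k => vmax B q k - v k)
        = (fun k => vmax B q k - 1) - (fun k => v k - 1) := by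
      funext k
      simp
    rw [hdiff, Matrix.mulVec_sub]
    have hle := feas_le B s q hBnonneg G hGadj hGconn hBdiag v hvD hvg i
    have h2 : (Lred B *ᵥ fun k => vmax B q k - 1) i = 2 * q i := by rw [hAq]
    simp only [Pi.sub_apply]
    rw [h2]
    linarith

end Stmt13Aux

open Stmt13Aux

theorem stmt13 {n : ℕ} (hn : 1 ≤ n)
    (B : Matrix (Fin (n + 1)) (Fin (n + 1)) ℝ)
    (hBsymm : ∀ i k, B i k = B k i)
    (hBdiag : ∀ i, B i i = 0)
    (hBnonneg : ∀ i k, 0 ≤ B i k)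
    (G : SimpleGraph (Fin (n + 1)))
    (hGadj : ∀ i k, G.Adj i k ↔ 0 < B i k)
    (hGtree : G.IsTree)
    (q : Fin n → ℝ)
    (s : Fin (n + 1) → Fin (n + 1) → ℝ)
    (hssymm : ∀ i k, s i k = s k i)
    (hvmaxD : memD B s (vmax B q))
    (hfeas : ∃ v, memD B s v ∧ ∀ i, v i ≤ gmap B s q v i) :
    ∃ vstar : Fin n → ℝ,
      (memD B s vstar ∧ ∀ i, vstar i ≤ gmap B s q vstar i) ∧
      gmap B s q vstar = vstar ∧
      (∀ v, memD B s v → (∀ i, v i ≤ gmap B s q v i) → ∀ i, v i ≤ vstar i) ∧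
      ∀ w : Fin n → ℝ, (∀ i, 0 < w i) →
        ∀ v, memD B s v → (∀ i, v i ≤ gmap B s q v i) →
          (∑ i, w i * Real.log (v i) ≤ ∑ i, w i * Real.log (vstar i)) ∧
          ((∑ i, w i * Real.log (v i)) = ∑ i, w i * Real.log (vstar i) → v = vstar) := by
  obtain ⟨v₀, hv₀D, hv₀g⟩ := hfeas
  have hGconn := hGtree.isConnected
  set F : Set (Fin n → ℝ) := {v | memD B s v ∧ ∀ i, v i ≤ gmap B s q v i} with hF
  have hv₀F : v₀ ∈ F := ⟨hv₀D, hv₀g⟩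
  have hle_vmax : ∀ v ∈ F, ∀ i, v i ≤ vmax B q i := fun v hv =>
    le_vmax B s q hBdiag hBnonneg G hGadj hGconn v hv.1 hv.2
  have hFsup : ∀ v ∈ F, ∀ v' ∈ F, v ⊔ v' ∈ F := by
    intro v hv v' hv'
    have hle1 : ∀ j, v j ≤ (v ⊔ v') j := fun j => le_sup_left
    have hle2 : ∀ j, v' j ≤ (v ⊔ v') j := fun j => le_sup_right
    refine ⟨⟨fun i => lt_of_lt_of_le (hv.1.1 i) (hle1 i), fun i k hBik => ?_⟩, fun i => ?_⟩
    · have mono := extV_mono hle1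
      exact le_trans (hv.1.2 i k hBik)
        (mul_le_mul (mono i) (mono k) (extV_nonneg hv.1.1 k)
          (le_trans (extV_nonneg hv.1.1 i) (mono i)))
    · have : (v ⊔ v') i = v i ⊔ v' i := rfl
      rw [this]
      refine sup_le ?_ ?_
      · exact le_trans (hv.2 i) (gmap_mono B s q hBnonneg hv.1.1 hle1 i)
      · exact le_trans (hv'.2 i) (gmap_mono B s q hBnonneg hv'.1.1 hle2 i)
  have hne : ∀ i, ((fun v : Fin n → ℝ => v i) '' F).Nonempty :=
    fun i => ⟨v₀ i, v₀, hv₀F, rfl⟩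
  have hbdd : ∀ i, BddAbove ((fun v : Fin n → ℝ => v i) '' F) := fun i =>
    ⟨vmax B q i, by rintro x ⟨v, hv, rfl⟩; exact hle_vmax v hv i⟩
  set vstar : Fin n → ℝ := fun i => sSup ((fun v => v i) '' F) with hvstar
  have hdom : ∀ v ∈ F, ∀ i, v i ≤ vstar i := fun v hv i =>
    le_csSup (hbdd i) ⟨v, hv, rfl⟩
  have hch : ∀ (m : ℕ) (i : Fin n), ∃ v, v ∈ F ∧ vstar i - 1 / (m + 1) < v i := by
    intro m i
    have hlt : vstar i - 1 / (m + 1 : ℝ) < vstar i := by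
      have h1 : (0 : ℝ) < 1 / (m + 1) := by positivity
      linarith
    obtain ⟨x, hx, hgt⟩ := exists_lt_of_lt_csSup (hne i) hlt
    obtain ⟨v, hv, rfl⟩ := hx
    exact ⟨v, hv, hgt⟩
  choose vv hvvF hvvlt using hch
  have hFinNe : (Finset.univ : Finset (Fin n)).Nonempty := ⟨⟨0, hn⟩, Finset.mem_univ _⟩
  set u : ℕ → Fin n → ℝ := fun m => Finset.univ.sup' hFinNe (fun j => vv m j) with hu
  have huF : ∀ m, u m ∈ F := fun m =>
    Finset.sup'_induction hFinNe _ (fun a ha b hb => hFsup a ha b hb) (fun j _ => hvvF m j)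
  have hulow : ∀ m i, vstar i - 1 / (m + 1) < u m i := by
    intro m i
    refine lt_of_lt_of_le (hvvlt m i) ?_
    exact (Finset.le_sup' (fun j => vv m j) (Finset.mem_univ i)) i
  have huhigh : ∀ m i, u m i ≤ vstar i := fun m i => hdom _ (huF m) i
  have htend : ∀ i, Filter.Tendsto (fun m => u m i) Filter.atTop (nhds (vstar i)) := by
    intro i
    have h1 : Filter.Tendsto (fun m : ℕ => vstar i - 1 / (m + 1)) Filter.atTop
        (nhds (vstar i)) := by
      have h2 := Filter.Tendsto.const_sub (vstar i) tendsto_one_div_add_atTop_nhds_zero_nat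
      simpa using h2
    exact tendsto_of_tendsto_of_tendsto_of_le_of_le h1 tendsto_const_nhds
      (fun m => (hulow m i).le) (fun m => huhigh m i)
  have hvstarF : vstar ∈ F := by
    have hvpos : ∀ i, 0 < vstar i := fun i =>
      lt_of_lt_of_le (hv₀D.1 i) (hdom v₀ hv₀F i)
    refine ⟨⟨hvpos, fun i k hB => ?_⟩, fun i => ?_⟩
    · have mono := extV_mono (hdom v₀ hv₀F)
      exact le_trans (hv₀D.2 i k hB)
        (mul_le_mul (mono i) (mono k) (extV_nonneg hv₀D.1 k)
          (le_trans (extV_nonneg hv₀D.1 i) (mono i)))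
    · refine le_of_tendsto (htend i) (Filter.Eventually.of_forall fun m => ?_)
      exact le_trans ((huF m).2 i)
        (gmap_mono B s q hBnonneg (huF m).1.1 (fun j => hdom _ (huF m) j) i)
  have hfix : gmap B s q vstar = vstar := by
    funext i
    by_contra hne'
    have hlt : vstar i < gmap B s q vstar i := lt_of_le_of_ne (hvstarF.2 i) (Ne.symm hne')
    set v' := Function.update vstar i (gmap B s q vstar i) with hv'
    have hgev : ∀ j, vstar j ≤ v' j := by
      intro j
      by_cases hj : j = i
      · subst hj
        rw [hv', Function.update_self]
        exact hlt.le
      · rw [hv', Function.update_of_ne hj]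
    have hv'F : v' ∈ F := by
      refine ⟨⟨fun j => lt_of_lt_of_le (hvstarF.1.1 j) (hgev j), fun a k hB => ?_⟩, fun j => ?_⟩
      · have mono := extV_mono hgev
        exact le_trans (hvstarF.1.2 a k hB)
          (mul_le_mul (mono a) (mono k) (extV_nonneg hvstarF.1.1 k)
            (le_trans (extV_nonneg hvstarF.1.1 a) (mono a)))
      · by_cases hj : j = i
        · subst hj
          calc v' j = gmap B s q vstar j := by rw [hv', Function.update_self]
            _ ≤ gmap B s q v' j := gmap_mono B s q hBnonneg hvstarF.1.1 hgev j
        · calc v' j = vstar j := by rw [hv', Function.update_of_ne hj]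
            _ ≤ gmap B s q vstar j := hvstarF.2 j
            _ ≤ gmap B s q v' j := gmap_mono B s q hBnonneg hvstarF.1.1 hgev j
    have hcontra := hdom v' hv'F i
    rw [hv', Function.update_self] at hcontra
    exact absurd hcontra (not_le.mpr hlt)
  refine ⟨vstar, ⟨hvstarF.1, hvstarF.2⟩, hfix,
    fun v hvD hvg i => hdom v ⟨hvD, hvg⟩ i, ?_⟩
  intro w hw v hvD hvg
  have hvF : v ∈ F := ⟨hvD, hvg⟩
  have hterm : ∀ i ∈ Finset.univ, w i * Real.log (v i) ≤ w i * Real.log (vstar i) :=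
    fun i _ => mul_le_mul_of_nonneg_left
      (Real.log_le_log (hvD.1 i) (hdom v hvF i)) (hw i).le
  refine ⟨Finset.sum_le_sum hterm, fun heq => ?_⟩
  have hall := (Finset.sum_eq_sum_iff_of_le hterm).mp heq
  funext i
  have h2 := hall i (Finset.mem_univ i)
  have h3 : Real.log (v i) = Real.log (vstar i) :=
    mul_left_cancel₀ (ne_of_gt (hw i)) h2
  calc v i = Real.exp (Real.log (v i)) := (Real.exp_log (hvD.1 i)).symm
    _ = Real.exp (Real.log (vstar i)) := by rw [h3]
    _ = vstar i := Real.exp_log (hvstarF.1.1 i)
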